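/- (Buckingham Pi, abstract version for positive inputs) Assume the units matrix U = [u_1 ... u_d] has rank k and the lattice {α ∈ ℤ^d : Uα = 0} has a ℤ-basis β_1,...,β_s with s = d − k, generating dimensionless monomials φ_l(x) = ∏_i x_i^{β_{li}}. Then a function f : (ℝ_{>0})^d → ℝ is invariant under the G = (ℝ_{>0})^k rescaling action if and only if there exists h : ℝ^s → ℝ with f(x) = h(φ_1(x),...,φ_s(x)) for all x ∈ (ℝ_{>0})^d. -/

import Mathlib

open Finset

section
variable {R : Type*} [CommRing R] [LinearOrder R] [IsStrictOrderedRing R] {ι : Type*} [Fintype ι]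

private lemma bp_sum_sq_zero {v : ι → R} (h : ∑ i, v i * v i = 0) : v = 0 := by
  funext i
  have := (Finset.sum_eq_zero_iff_of_nonneg (fun i _ => mul_self_nonneg (v i))).mp h i
    (Finset.mem_univ i)
  simpa [mul_self_eq_zero] using this
end

private lemma bp_gram_calc {R : Type*} [CommRing R] {ι : Type*} [Fintype ι] {d : ℕ}
    (a : ι → Fin d → R) (v : ι → R) :
    ∑ l, v l * (∑ m, (∑ i, a l i * a m i) * v m)
      = ∑ i, (∑ l, v l * a l i) * (∑ l, v l * a l i) := by
  calc ∑ l, v l * (∑ m, (∑ i, a l i * a m i) * v m)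
      = ∑ l, ∑ m, ∑ i, (v l * a l i) * (v m * a m i) := by
        refine Finset.sum_congr rfl fun l _ => ?_
        rw [Finset.mul_sum]
        refine Finset.sum_congr rfl fun m _ => ?_
        rw [Finset.sum_mul, Finset.mul_sum]
        exact Finset.sum_congr rfl fun i _ => by ring
    _ = ∑ l, ∑ i, ∑ m, (v l * a l i) * (v m * a m i) :=
        Finset.sum_congr rfl fun l _ => Finset.sum_comm
    _ = ∑ i, ∑ l, ∑ m, (v l * a l i) * (v m * a m i) := Finset.sum_comm
    _ = ∑ i, (∑ l, v l * a l i) * (∑ l, v l * a l i) := by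
        refine Finset.sum_congr rfl fun i _ => ?_
        rw [Finset.sum_mul]
        exact Finset.sum_congr rfl fun l _ => (Finset.mul_sum _ _ _).symm

private lemma bp_swap {R : Type*} [CommRing R] {ι κ : Type*} [Fintype ι] [Fintype κ]
    (A : ι → κ → R) (B : κ → R) :
    ∑ j, (∑ i, A i j) * B j = ∑ i, ∑ j, A i j * B j := by
  calc ∑ j, (∑ i, A i j) * B j = ∑ j, ∑ i, A i j * B j :=
        Finset.sum_congr rfl fun j _ => Finset.sum_mul _ _ _
    _ = ∑ i, ∑ j, A i j * B j := Finset.sum_comm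

/-- ℤ-linear independence of integer vectors implies ℝ-linear independence, via the Gram matrix. -/
private lemma bp_beta_indep {s d : ℕ} (β : Fin s → Fin d → ℤ)
    (hindep : ∀ c : Fin s → ℤ, (∑ l, c l • β l) = 0 → c = 0) :
    ∀ c : Fin s → ℝ, (∀ i, ∑ l, c l * (β l i : ℝ) = 0) → c = 0 := by
  classical
  set G : Matrix (Fin s) (Fin s) ℤ := Matrix.of fun l m => ∑ i, β l i * β m i with hG
  have hdet : G.det ≠ 0 := by
    intro hdet
    obtain ⟨v, hv, hGv⟩ := Matrix.exists_mulVec_eq_zero_iff.mpr hdet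
    have hsum : ∑ l, v l * (G.mulVec v) l = 0 := by
      simp [hGv]
    have hcalc : ∑ i, (∑ l, v l * β l i) * (∑ l, v l * β l i) = 0 := by
      rw [← bp_gram_calc (fun l i => β l i) v]
      exact hsum
    have hzero : (fun i => ∑ l, v l * β l i) = 0 := bp_sum_sq_zero hcalc
    apply hv
    apply hindep
    funext i
    have := congrFun hzero i
    simpa [Finset.sum_apply] using this
  intro c hc
  have hdetR : ((G.map (Int.cast : ℤ → ℝ)).det) ≠ 0 := by
    have hmap := RingHom.map_det (Int.castRingHom ℝ) G
    rw [RingHom.mapMatrix_apply, Int.coe_castRingHom] at hmap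
    rw [← hmap]
    simpa using hdet
  apply Matrix.eq_zero_of_mulVec_eq_zero hdetR
  funext l
  show ∑ m, (G.map (Int.cast : ℤ → ℝ)) l m * c m = (0 : _)
  calc ∑ m, (G.map (Int.cast : ℤ → ℝ)) l m * c m
      = ∑ m, (∑ i, (β l i : ℝ) * (β m i : ℝ)) * c m := by
        refine Finset.sum_congr rfl fun m _ => ?_
        congr 1
        simp [hG]
    _ = ∑ i, ∑ m, ((β l i : ℝ) * (β m i : ℝ)) * c m :=
        bp_swap (fun i m => (β l i : ℝ) * (β m i : ℝ)) c
    _ = ∑ i, (β l i : ℝ) * ∑ m, c m * (β m i : ℝ) := by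
        refine Finset.sum_congr rfl fun i _ => ?_
        rw [Finset.mul_sum]
        exact Finset.sum_congr rfl fun m _ => by ring
    _ = 0 := by
        refine Finset.sum_eq_zero fun i _ => ?_
        rw [hc i, mul_zero]

/-- Full row rank over `ℚ` implies the rows of `U` are `ℝ`-linearly independent. -/
private lemma bp_rows_indep {k d : ℕ} (u : Fin d → Fin k → ℤ) (U : Matrix (Fin k) (Fin d) ℤ)
    (hU : U = Matrix.of fun j i => u i j)
    (hrank : (U.map (Int.cast : ℤ → ℚ)).rank = k) :
    ∀ w : Fin k → ℝ, (∀ i, ∑ j, w j * (u i j : ℝ) = 0) → w = 0 := by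
  classical
  set Q : Matrix (Fin k) (Fin d) ℚ := U.map Int.cast with hQdef
  have hQ : ∀ j i, Q j i = (u i j : ℚ) := by
    intro j i
    simp [hQdef, hU]
  have hrange : LinearMap.range Q.mulVecLin = ⊤ := by
    apply Submodule.eq_top_of_finrank_eq
    have h1 : Module.finrank ℚ (LinearMap.range Q.mulVecLin) = Q.rank := rfl
    rw [h1, hrank, Module.finrank_pi, Fintype.card_fin]
  have hsurj : ∀ v : Fin k → ℚ, ∃ x : Fin d → ℚ, Q.mulVec x = v := by
    intro v
    obtain ⟨x, hx⟩ := LinearMap.range_eq_top.mp hrange v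
    exact ⟨x, by rw [← Matrix.mulVecLin_apply]; exact hx⟩
  set H : Matrix (Fin k) (Fin k) ℚ :=
    Matrix.of (fun j j' => ∑ i, (u i j : ℚ) * (u i j' : ℚ)) with hH
  have hdet : H.det ≠ 0 := by
    intro hdet
    obtain ⟨v, hv, hHv⟩ := Matrix.exists_mulVec_eq_zero_iff.mpr hdet
    have hsum : ∑ j, v j * (H.mulVec v) j = 0 := by simp [hHv]
    have hcalc : ∑ i, (∑ j, v j * (u i j : ℚ)) * (∑ j, v j * (u i j : ℚ)) = 0 := by
      rw [← bp_gram_calc (fun j i => (u i j : ℚ)) v]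
      exact hsum
    have hq : (fun i => ∑ j, v j * (u i j : ℚ)) = 0 := bp_sum_sq_zero hcalc
    obtain ⟨x, hx⟩ := hsurj v
    apply hv
    apply bp_sum_sq_zero (v := v)
    calc ∑ j, v j * v j = ∑ j, v j * (Q.mulVec x) j := by rw [hx]
      _ = ∑ j, ∑ i, (v j * (u i j : ℚ)) * x i := by
          refine Finset.sum_congr rfl fun j _ => ?_
          rw [Matrix.mulVec, dotProduct, Finset.mul_sum]
          exact Finset.sum_congr rfl fun i _ => by rw [hQ]; ring
      _ = ∑ i, ∑ j, (v j * (u i j : ℚ)) * x i := Finset.sum_comm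
      _ = ∑ i, (∑ j, v j * (u i j : ℚ)) * x i :=
          Finset.sum_congr rfl fun i _ => (Finset.sum_mul _ _ _).symm
      _ = 0 := by
          refine Finset.sum_eq_zero fun i _ => ?_
          rw [congrFun hq i]
          simp
  intro w hw
  have hdetR : ((H.map (Rat.cast : ℚ → ℝ)).det) ≠ 0 := by
    have hmap := RingHom.map_det (Rat.castHom ℝ) H
    rw [RingHom.mapMatrix_apply, Rat.coe_castHom] at hmap
    rw [← hmap]
    simpa using hdet
  apply Matrix.eq_zero_of_mulVec_eq_zero hdetR
  funext j
  show ∑ j', (H.map (Rat.cast : ℚ → ℝ)) j j' * w j' = (0 : ℝ)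
  calc ∑ j', (H.map (Rat.cast : ℚ → ℝ)) j j' * w j'
      = ∑ j', (∑ i, (u i j : ℝ) * (u i j' : ℝ)) * w j' := by
        refine Finset.sum_congr rfl fun j' _ => ?_
        congr 1
        simp only [hH, Matrix.map_apply, Matrix.of_apply]
        push_cast
        rfl
    _ = ∑ i, ∑ j', ((u i j : ℝ) * (u i j' : ℝ)) * w j' :=
        bp_swap (fun i j' => (u i j : ℝ) * (u i j' : ℝ)) w
    _ = ∑ i, (u i j : ℝ) * ∑ j', w j' * (u i j' : ℝ) := by
        refine Finset.sum_congr rfl fun i _ => ?_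
        rw [Finset.mul_sum]
        exact Finset.sum_congr rfl fun j' _ => by ring
    _ = 0 := by
        refine Finset.sum_eq_zero fun i _ => ?_
        rw [hw i, mul_zero]

private lemma bp_dot_span {d : ℕ} {ι : Type*} (v : ι → Fin d → ℝ) (y : Fin d → ℝ)
    (h : ∀ m, ∑ i, v m i * y i = 0) :
    ∀ t ∈ Submodule.span ℝ (Set.range v), ∑ i, t i * y i = 0 := by
  intro t ht
  induction ht using Submodule.span_induction with
  | mem z hz => obtain ⟨m, rfl⟩ := hz; exact h m
  | zero => simp
  | add a b _ _ ha hb =>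
      simp only [Pi.add_apply, add_mul, Finset.sum_add_distrib, ha, hb, add_zero]
  | smul c a _ ha =>
      simp only [Pi.smul_apply, smul_eq_mul, mul_assoc, ← Finset.mul_sum, ha, mul_zero]

/-- The decomposition lemma: a vector orthogonal to all the `β l` lies in the
row space of `U`. -/
private lemma bp_decomp {k d s : ℕ} (u : Fin d → Fin k → ℤ) (β : Fin s → Fin d → ℤ)
    (horth : ∀ l j, ∑ i, (u i j : ℝ) * (β l i : ℝ) = 0)
    (hA : ∀ w : Fin k → ℝ, (∀ i, ∑ j, w j * (u i j : ℝ) = 0) → w = 0)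
    (hB : ∀ c : Fin s → ℝ, (∀ i, ∑ l, c l * (β l i : ℝ) = 0) → c = 0)
    (hks : k + s = d)
    (y : Fin d → ℝ) (hy : ∀ l, ∑ i, (β l i : ℝ) * y i = 0) :
    ∃ w : Fin k → ℝ, ∀ i, y i = ∑ j, (u i j : ℝ) * w j := by
  classical
  set a : Fin k → Fin d → ℝ := fun j i => (u i j : ℝ) with ha
  set b : Fin s → Fin d → ℝ := fun l i => (β l i : ℝ) with hb
  set R : Submodule ℝ (Fin d → ℝ) := Submodule.span ℝ (Set.range a) with hR
  set S : Submodule ℝ (Fin d → ℝ) := Submodule.span ℝ (Set.range b) with hS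
  have hia : LinearIndependent ℝ a := by
    rw [Fintype.linearIndependent_iff]
    intro w hw j
    have : w = 0 := by
      apply hA
      intro i
      have := congrFun hw i
      simpa [Finset.sum_apply, ha] using this
    exact congrFun this j
  have hib : LinearIndependent ℝ b := by
    rw [Fintype.linearIndependent_iff]
    intro c hc l
    have : c = 0 := by
      apply hB
      intro i
      have := congrFun hc i
      simpa [Finset.sum_apply, hb] using this
    exact congrFun this l
  -- orthogonality of S against rows
  have hSa : ∀ j, ∀ t ∈ S, ∑ i, t i * a j i = 0 := by
    intro j t ht
    exact bp_dot_span b (a j) (fun l => by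
      have := horth l j
      simpa [mul_comm, ha, hb] using this) t ht
  -- trivial intersection
  have hinf : R ⊓ S = ⊥ := by
    rw [Submodule.eq_bot_iff]
    rintro t ⟨htR, htS⟩
    -- for every l, t ⊥ b l since t ∈ R
    have h1 : ∀ l, ∑ i, b l i * t i = 0 := by
      intro l
      have := bp_dot_span a (b l) (fun j => by
        have := horth l j
        simpa [ha, hb] using this) t htR
      simpa [mul_comm] using this
    have h2 : ∑ i, t i * t i = 0 := bp_dot_span b t h1 t htS
    exact bp_sum_sq_zero h2
  have hfinR : Module.finrank ℝ R = k := by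
    rw [hR, finrank_span_eq_card hia, Fintype.card_fin]
  have hfinS : Module.finrank ℝ S = s := by
    rw [hS, finrank_span_eq_card hib, Fintype.card_fin]
  have hsup : R ⊔ S = ⊤ := by
    apply Submodule.eq_top_of_finrank_eq
    have := Submodule.finrank_sup_add_finrank_inf_eq R S
    rw [hinf, hfinR, hfinS] at this
    simp only [finrank_bot, add_zero] at this
    rw [this, hks, Module.finrank_pi, Fintype.card_fin]
  -- decompose y
  have hy' : y ∈ R ⊔ S := by rw [hsup]; exact Submodule.mem_top
  obtain ⟨r, hr, t, ht, hrt⟩ := Submodule.mem_sup.mp hy'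
  -- t = 0
  have hty : ∑ i, t i * y i = 0 := bp_dot_span b y hy t ht
  have htr : ∑ i, t i * r i = 0 := by
    have h1 : ∀ l, ∑ i, b l i * r i = 0 := by
      intro l
      have := bp_dot_span a (b l) (fun j => by
        have := horth l j
        simpa [ha, hb] using this) r hr
      simpa [mul_comm] using this
    exact bp_dot_span b r h1 t ht
  have htt : ∑ i, t i * t i = 0 := by
    have : ∀ i, t i = y i - r i := by
      intro i
      have := congrFun hrt i
      simp only [Pi.add_apply] at this
      linarith
    calc ∑ i, t i * t i = ∑ i, (t i * y i - t i * r i) := by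
          refine Finset.sum_congr rfl fun i _ => ?_
          rw [this i]; ring
      _ = 0 := by rw [Finset.sum_sub_distrib, hty, htr, sub_zero]
  have ht0 : t = 0 := bp_sum_sq_zero htt
  have hyR : y ∈ R := by
    rw [← hrt, ht0, add_zero]
    exact hr
  rw [hR] at hyR
  obtain ⟨w, hw⟩ := (Submodule.mem_span_range_iff_exists_fun ℝ).mp hyR
  refine ⟨w, fun i => ?_⟩
  have := congrFun hw i
  simp only [Finset.sum_apply, Pi.smul_apply, smul_eq_mul, ha] at this
  rw [← this]
  exact Finset.sum_congr rfl fun j _ => by ring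

private lemma bp_zpow_exp {a : ℝ} (ha : 0 < a) (n : ℤ) :
    a ^ n = Real.exp (n * Real.log a) := by
  rw [← Real.rpow_intCast a n, Real.rpow_def_of_pos ha, mul_comm]

private lemma bp_prod_zpow {d : ℕ} (x : Fin d → ℝ) (hx : ∀ i, 0 < x i) (e : Fin d → ℤ) :
    ∏ i, x i ^ e i = Real.exp (∑ i, (e i : ℝ) * Real.log (x i)) := by
  rw [Real.exp_sum]
  exact Finset.prod_congr rfl fun i _ => bp_zpow_exp (hx i) (e i)


/-- Buckingham Pi theorem (abstract version for positive inputs): if the units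
matrix `U` has rank `k`, and `β_1,…,β_s` (with `s = d − k`) is a `ℤ`-basis of
the lattice `{α ∈ ℤ^d : U α = 0}`, generating the dimensionless monomials
`φ_l(x) = ∏ i, x i ^ β l i`, then `f : (ℝ_{>0})^d → ℝ` is invariant under the
rescaling action of `G = (ℝ_{>0})^k` iff it factors through `(φ_1,…,φ_s)`. -/
theorem buckingham_pi (k d s : ℕ) (u : Fin d → Fin k → ℤ)
    (U : Matrix (Fin k) (Fin d) ℤ) (hU : U = Matrix.of fun j i => u i j)
    (hrank : (U.map (Int.cast : ℤ → ℚ)).rank = k)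
    (hs : s = d - k)
    (β : Fin s → Fin d → ℤ)
    (hker : ∀ l, U.mulVec (β l) = 0)
    (hindep : ∀ c : Fin s → ℤ, (∑ l, c l • β l) = 0 → c = 0)
    (hspan : ∀ a : Fin d → ℤ, U.mulVec a = 0 →
      ∃ c : Fin s → ℤ, a = ∑ l, c l • β l)
    (f : (Fin d → ℝ) → ℝ) :
    (∀ (x : Fin d → ℝ), (∀ i, 0 < x i) →
        ∀ (g : Fin k → ℝ), (∀ j, 0 < g j) →
          f (fun i => (∏ j, g j ^ (-(u i j))) * x i) = f x)
    ↔ (∃ h : (Fin s → ℝ) → ℝ, ∀ (x : Fin d → ℝ), (∀ i, 0 < x i) →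
        f x = h (fun l => ∏ i, x i ^ β l i)) := by
  classical
  have hker' : ∀ l j, ∑ i, (u i j : ℝ) * (β l i : ℝ) = 0 := by
    intro l j
    have h0 := congrFun (hker l) j
    rw [hU] at h0
    simp only [Matrix.mulVec, dotProduct, Matrix.of_apply, Pi.zero_apply] at h0
    exact_mod_cast h0
  have hkd : k ≤ d := by
    have h1 := Matrix.rank_le_card_width (U.map (Int.cast : ℤ → ℚ))
    rw [hrank, Fintype.card_fin] at h1
    exact h1
  have hks : k + s = d := by omega
  have hA := bp_rows_indep u U hU hrank
  have hB := bp_beta_indep β hindep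
  constructor
  · intro hinv
    have key : ∀ x x' : Fin d → ℝ, (∀ i, 0 < x i) → (∀ i, 0 < x' i) →
        (∀ l, ∏ i, x i ^ β l i = ∏ i, x' i ^ β l i) → f x = f x' := by
      intro x x' hx hx' hphi
      set y : Fin d → ℝ := fun i => Real.log (x i) - Real.log (x' i) with hy
      have hyl : ∀ l, ∑ i, (β l i : ℝ) * y i = 0 := by
        intro l
        have h1 := hphi l
        rw [bp_prod_zpow x hx, bp_prod_zpow x' hx'] at h1
        have h2 := Real.exp_injective h1
        simp only [hy, mul_sub, Finset.sum_sub_distrib, h2, sub_self]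
      obtain ⟨w, hw⟩ := bp_decomp u β hker' hA hB hks y hyl
      set g : Fin k → ℝ := fun j => Real.exp (-(w j)) with hg
      have hgpos : ∀ j, 0 < g j := fun j => Real.exp_pos _
      have harg : (fun i => (∏ j, g j ^ (-(u i j))) * x' i) = x := by
        funext i
        have h3 : ∏ j, g j ^ (-(u i j)) = Real.exp (y i) := by
          have h4 : ∀ j, g j ^ (-(u i j)) = Real.exp ((u i j : ℝ) * w j) := by
            intro j
            rw [bp_zpow_exp (hgpos j), hg]
            simp only [Real.log_exp]
            push_cast
            ring_nf
          rw [Finset.prod_congr rfl fun j _ => h4 j, ← Real.exp_sum]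
          congr 1
          rw [hw i]
        rw [h3, hy]
        rw [Real.exp_sub, Real.exp_log (hx i), Real.exp_log (hx' i)]
        exact div_mul_cancel₀ _ (ne_of_gt (hx' i))
      have h5 := hinv x' hx' g hgpos
      rw [harg] at h5
      exact h5
    refine ⟨fun z => if hz : ∃ x : Fin d → ℝ, (∀ i, 0 < x i) ∧
        (fun l => ∏ i, x i ^ β l i) = z then f hz.choose else 0, ?_⟩
    intro x hx
    have hz : ∃ x' : Fin d → ℝ, (∀ i, 0 < x' i) ∧
        (fun l => ∏ i, x' i ^ β l i) = (fun l => ∏ i, x i ^ β l i) := ⟨x, hx, rfl⟩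
    show f x = if hz : ∃ x' : Fin d → ℝ, (∀ i, 0 < x' i) ∧
        (fun l => ∏ i, x' i ^ β l i) = (fun l => ∏ i, x i ^ β l i) then f hz.choose else 0
    rw [dif_pos hz]
    obtain ⟨hpos, hphi⟩ := hz.choose_spec
    exact key x hz.choose hx hpos (fun l => (congrFun hphi l).symm)
  · rintro ⟨h, hf⟩ x hx g hg
    have hppos : ∀ i, 0 < ∏ j, g j ^ (-(u i j)) :=
      fun i => Finset.prod_pos fun j _ => zpow_pos (hg j) _
    have hx'' : ∀ i, 0 < (∏ j, g j ^ (-(u i j))) * x i :=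
      fun i => mul_pos (hppos i) (hx i)
    rw [hf x hx, hf _ hx'']
    congr 1
    funext l
    rw [bp_prod_zpow _ hx'', bp_prod_zpow x hx]
    congr 1
    have hlog : ∀ i, Real.log ((∏ j, g j ^ (-(u i j))) * x i)
        = (∑ j, (-(u i j) : ℝ) * Real.log (g j)) + Real.log (x i) := by
      intro i
      rw [Real.log_mul (ne_of_gt (hppos i)) (ne_of_gt (hx i))]
      congr 1
      rw [Real.log_prod (fun j _ => ne_of_gt (zpow_pos (hg j) _))]
      exact Finset.sum_congr rfl fun j _ => by rw [Real.log_zpow]; push_cast; ring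
    have hzero : ∑ i, ((β l i : ℝ) * ∑ j, (-(u i j) : ℝ) * Real.log (g j)) = 0 := by
      calc ∑ i, ((β l i : ℝ) * ∑ j, (-(u i j) : ℝ) * Real.log (g j))
          = ∑ i, ∑ j, (-((u i j : ℝ) * (β l i : ℝ))) * Real.log (g j) := by
            refine Finset.sum_congr rfl fun i _ => ?_
            rw [Finset.mul_sum]
            exact Finset.sum_congr rfl fun j _ => by ring
        _ = ∑ j, ∑ i, (-((u i j : ℝ) * (β l i : ℝ))) * Real.log (g j) := Finset.sum_comm
        _ = 0 := by
            refine Finset.sum_eq_zero fun j _ => ?_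
            rw [← Finset.sum_mul]
            have h6 : ∑ i, -((u i j : ℝ) * (β l i : ℝ)) = 0 := by
              rw [Finset.sum_neg_distrib, hker' l j, neg_zero]
            rw [h6, zero_mul]
    calc ∑ i, (β l i : ℝ) * Real.log ((∏ j, g j ^ (-(u i j))) * x i)
        = (∑ i, ((β l i : ℝ) * ∑ j, (-(u i j) : ℝ) * Real.log (g j)))
            + ∑ i, (β l i : ℝ) * Real.log (x i) := by
          rw [← Finset.sum_add_distrib]
          exact Finset.sum_congr rfl fun i _ => by rw [hlog i]; ring
      _ = ∑ i, (β l i : ℝ) * Real.log (x i) := by rw [hzero, zero_add]
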